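/- If g : (0,∞) → (0,∞) satisfies g(t) = t · g(1/t) for all t > 0 and g(t) = t/(1+t), then for any a ∈ ℝ and any symmetric probability density μ on ℝ (i.e. μ(z) = μ(-z)), the integral ∫_{ℝ} g(exp(a·z)) μ(z) dz = 1/2. -/

import Mathlib

open MeasureTheory Real

/-- The normalizing constant of the Barker proposal with balancing function
`g(t) = t/(1+t)` equals `1/2`, for any symmetric probability density `μ` on `ℝ`
and any gradient value `a`. -/
theorem barker_normalising_constant
    (g : ℝ → ℝ) (hg : ∀ t > (0:ℝ), g t = t / (1 + t))
    (hbal : ∀ t > (0:ℝ), g t = t * g (1 / t))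
    (μ : ℝ → ℝ) (hμ_meas : Measurable μ) (hμ_nonneg : ∀ z, 0 ≤ μ z)
    (hμ_int : Integrable μ) (hμ_prob : ∫ z, μ z = 1)
    (hμ_symm : ∀ z, μ z = μ (-z)) (a : ℝ) :
    ∫ z, g (Real.exp (a * z)) * μ z = 1 / 2 := by
  -- rewrite g on exponentials
  have hrw : ∀ b z : ℝ, g (Real.exp (b * z)) = Real.exp (b * z) / (1 + Real.exp (b * z)) :=
    fun b z => hg _ (Real.exp_pos _)
  have hpos : ∀ x : ℝ, (0:ℝ) < 1 + Real.exp x := fun x => by positivity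
  -- integrability of both pieces
  have hint : ∀ b : ℝ, Integrable (fun z => Real.exp (b * z) / (1 + Real.exp (b * z)) * μ z) := by
    intro b
    apply hμ_int.bdd_mul (c := 1)
    · exact (Continuous.div ((Real.continuous_exp).comp (continuous_const.mul continuous_id))
        (continuous_const.add ((Real.continuous_exp).comp (continuous_const.mul continuous_id)))
        (fun z => (hpos (b*z)).ne')).aestronglyMeasurable
    · refine Filter.Eventually.of_forall (fun z => ?_)
      rw [Real.norm_eq_abs, abs_of_nonneg (by positivity)]
      rw [div_le_one (hpos _)]
      linarith [Real.exp_pos (b*z)]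
  -- symmetry: integral with -a equals integral with a
  have hsymm : ∫ z, Real.exp (-a * z) / (1 + Real.exp (-a * z)) * μ z
      = ∫ z, Real.exp (a * z) / (1 + Real.exp (a * z)) * μ z := by
    rw [← MeasureTheory.integral_neg_eq_self
      (fun z => Real.exp (a * z) / (1 + Real.exp (a * z)) * μ z) volume]
    congr 1
    funext z
    rw [← hμ_symm z]
    ring_nf
  -- the sum of the two integrands is μ
  have hsum : ∀ z, Real.exp (a * z) / (1 + Real.exp (a * z)) * μ z
      + Real.exp (-a * z) / (1 + Real.exp (-a * z)) * μ z = μ z := by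
    intro z
    have h1 := hpos (a * z)
    have h2 := hpos (-a * z)
    have he : Real.exp (-a * z) = 1 / Real.exp (a * z) := by
      rw [neg_mul, Real.exp_neg, one_div]
    rw [he]
    have hp := Real.exp_pos (a * z)
    field_simp
    ring
  have key : (∫ z, Real.exp (a * z) / (1 + Real.exp (a * z)) * μ z)
      + (∫ z, Real.exp (-a * z) / (1 + Real.exp (-a * z)) * μ z) = 1 := by
    rw [← MeasureTheory.integral_add (hint a) (hint (-a)),
      integral_congr_ae (Filter.Eventually.of_forall hsum), hμ_prob]
  simp only [hrw]
  linarith [hsymm, key]
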